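/- arXiv:1605.06624 — 5 statements merged into one kernel-verified Lean document; each statement's English description precedes it below -/
import Mathlib

section
/- For every u in B_G there exists z' ∈ T' such that G u − ω̄(ρ(G u)) = ᵗγ₀ z', and z' is unique; consequently the generalized trace γ_G u = (ᵗγ₀)⁻¹(G u − ω̄ ρ G u) ∈ T' is well defined. -/
open NormedSpace

/-- For every u ∈ B_G there exists a unique z' ∈ T' such that
G u − ω̄(ρ(G u)) = ᵗγ₀ z'; consequently the generalized trace
γ_G u = (ᵗγ₀)⁻¹(G u − ω̄ ρ G u) ∈ T' is well defined. Here ρ = ᵗj,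
B_G = {u ∈ B₁ : ρ(G u) ∈ ᵗj₀(L')}, Im ᵗγ₀ = ker ᵗj, ᵗγ₀ injective and
ω̄(ᵗj₀ l') = ᵗj₁ l'. -/
theorem trace_well_defined
    {L B0 B1 T : Type*}
    [NormedAddCommGroup L] [NormedSpace ℝ L] [CompleteSpace L]
    [NormedAddCommGroup B0] [NormedSpace ℝ B0] [CompleteSpace B0]
    [NormedAddCommGroup B1] [NormedSpace ℝ B1] [CompleteSpace B1]
    [NormedAddCommGroup T] [NormedSpace ℝ T] [CompleteSpace T]
    (j0 : B0 →L[ℝ] L) (j1 : B1 →L[ℝ] L) (j : B0 →L[ℝ] B1) (γ0 : B1 →L[ℝ] T)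
    (hj0inj : Function.Injective j0) (hj0dense : DenseRange j0)
    (hj1inj : Function.Injective j1) (hj1dense : DenseRange j1)
    (hjinj : Function.Injective j) (hjclosed : IsClosed (Set.range j))
    (hγ0closed : IsClosed (Set.range γ0))
    (hcomp : ∀ v : B0, j0 v = j1 (j v))
    (hrangeker : Set.range (fun t' : StrongDual ℝ T => t'.comp γ0) =
      {b' : StrongDual ℝ B1 | b'.comp j = 0})
    (htγ0inj : Function.Injective (fun t' : StrongDual ℝ T => t'.comp γ0))
    (ω : StrongDual ℝ B0 → StrongDual ℝ B1)
    (hω : ∀ l' : StrongDual ℝ L, ω (l'.comp j0) = l'.comp j1)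
    (G : B1 → StrongDual ℝ B1) (hG : Continuous G) :
    ∀ u ∈ {u : B1 | ∃ l' : StrongDual ℝ L, (G u).comp j = l'.comp j0},
      ∃! z' : StrongDual ℝ T, G u - ω ((G u).comp j) = z'.comp γ0 := by
  rintro u ⟨l', hl'⟩
  have hmem : (G u - ω ((G u).comp j)) ∈
      Set.range (fun t' : StrongDual ℝ T => t'.comp γ0) := by
    rw [hrangeker, Set.mem_setOf_eq, hl', hω]
    ext v
    have h1 : (G u) (j v) = l' (j0 v) := congrFun (congrArg DFunLike.coe hl') v
    simp [h1, hcomp v]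
  obtain ⟨z', hz'⟩ := hmem
  exact ⟨z', hz'.symm, fun y hy => htγ0inj (by simp only [← hy, hz'])⟩
end

section
/- Under the density hypothesis j_m(C_m⁺) dense in C⁺, the dual cone D_m⁺ equals the closure of ᵗj_m(D⁺) in B_m': that is, D_m⁺ = closure(ᵗj_m D⁺). -/
open NormedSpace

/-- Separation of a point from a closed convex cone containing 0: we may choose
a separating functional nonnegative on the cone and negative at the point. -/
lemma cone_separation {E : Type*} [NormedAddCommGroup E] [NormedSpace ℝ E]
    {S : Set E} (hconv : Convex ℝ S) (hclosed : IsClosed S) (h0 : (0 : E) ∈ S)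
    (hcone : ∀ c : ℝ, 0 ≤ c → ∀ x ∈ S, c • x ∈ S)
    {x : E} (hx : x ∉ S) :
    ∃ f : E →L[ℝ] ℝ, f x < 0 ∧ ∀ s ∈ S, 0 ≤ f s := by
  obtain ⟨f, u, hfu, hfS⟩ := geometric_hahn_banach_point_closed hconv hclosed hx
  have hu0 : u < 0 := by simpa using hfS 0 h0
  refine ⟨f, hfu.trans hu0, ?_⟩
  intro s hs
  by_contra h
  push_neg at h
  have ht : (0 : ℝ) < 2 * u / f s := div_pos_of_neg_of_neg (by linarith) h
  have h1 := hfS _ (hcone _ ht.le s hs)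
  rw [map_smul, smul_eq_mul, div_mul_cancel₀ _ (ne_of_lt h)] at h1
  linarith

/-- Under the density hypothesis j_m(C_m⁺) dense in C⁺, the dual
cone D_m⁺ equals the closure of ᵗj_m(D⁺) in B_m'. -/
theorem dual_cone_eq_closure_transpose_image
    {L Bm : Type*}
    [NormedAddCommGroup L] [NormedSpace ℝ L] [CompleteSpace L]
    [NormedAddCommGroup Bm] [NormedSpace ℝ Bm] [CompleteSpace Bm]
    (hLrefl : Function.Surjective (inclusionInDoubleDual ℝ L))
    (hBmrefl : Function.Surjective (inclusionInDoubleDual ℝ Bm))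
    (jm : Bm →L[ℝ] L) (hjminj : Function.Injective jm)
    (hjmdense : DenseRange jm)
    (C : Set L)
    (hCclosed : IsClosed C) (hCconvex : Convex ℝ C) (hC0 : (0 : L) ∈ C)
    (hCcone : ∀ c : ℝ, 0 ≤ c → ∀ x ∈ C, c • x ∈ C)
    (hCgen : ∀ x : L, ∃ a ∈ C, ∃ b ∈ C, x = a - b)
    (hCpointed : C ∩ (-C) = {0})
    (hdense : C ⊆ closure (jm '' {v : Bm | jm v ∈ C})) :
    {u' : StrongDual ℝ Bm | ∀ u : Bm, jm u ∈ C → 0 ≤ u' u} =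
      closure ((fun l' : StrongDual ℝ L => l'.comp jm) ''
        {l' : StrongDual ℝ L | ∀ x ∈ C, 0 ≤ l' x}) := by
  set D : Set (StrongDual ℝ L) := {l' : StrongDual ℝ L | ∀ x ∈ C, 0 ≤ l' x} with hD
  set P : Set (StrongDual ℝ Bm) := (fun l' : StrongDual ℝ L => l'.comp jm) '' D with hP
  -- basic facts about P
  have hPconv : Convex ℝ P := by
    rintro _ ⟨f, hf, rfl⟩ _ ⟨g, hg, rfl⟩ a b ha hb hab
    refine ⟨a • f + b • g, fun x hx => ?_, ?_⟩
    · have := hf x hx; have := hg x hx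
      simp only [ContinuousLinearMap.add_apply, ContinuousLinearMap.smul_apply,
        smul_eq_mul]
      positivity
    · ext v; simp
  have hP0 : (0 : StrongDual ℝ Bm) ∈ P := ⟨0, fun x _ => le_refl 0, by ext v; simp⟩
  have hPcone : ∀ c : ℝ, 0 ≤ c → ∀ x ∈ P, c • x ∈ P := by
    rintro c hc _ ⟨f, hf, rfl⟩
    exact ⟨c • f, fun x hx => by
      simpa [smul_eq_mul] using mul_nonneg hc (hf x hx), by ext v; simp⟩
  have hSconv : Convex ℝ (closure P) := hPconv.closure
  have hS0 : (0 : StrongDual ℝ Bm) ∈ closure P := subset_closure hP0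
  have hScone : ∀ c : ℝ, 0 ≤ c → ∀ x ∈ closure P, c • x ∈ closure P := by
    intro c hc x hx
    exact map_mem_closure (continuous_const_smul c) hx (fun y hy => hPcone c hc y hy)
  apply Set.Subset.antisymm
  · -- hard direction: D_m⁺ ⊆ closure P
    intro u' hu'
    by_contra hnot
    obtain ⟨Φ, hΦu, hΦS⟩ := cone_separation hSconv isClosed_closure hS0 hScone hnot
    obtain ⟨u, hu⟩ := hBmrefl Φ
    have hΦeval : ∀ f : StrongDual ℝ Bm, Φ f = f u := by
      intro f
      rw [← hu]; rfl
    -- jm u is in the bipolar of C, hence in C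
    have hjmuC : jm u ∈ C := by
      by_contra hxC
      obtain ⟨g, hgx, hgC⟩ := cone_separation hCconvex hCclosed hC0 hCcone hxC
      have hgP : g.comp jm ∈ P := ⟨g, hgC, rfl⟩
      have := hΦS _ (subset_closure hgP)
      rw [hΦeval] at this
      exact absurd this (not_le.mpr hgx)
    have : 0 ≤ u' u := hu' u hjmuC
    rw [← hΦeval] at this
    linarith
  · -- easy direction: closure P ⊆ D_m⁺
    have hclosedDm : IsClosed {u' : StrongDual ℝ Bm | ∀ u : Bm, jm u ∈ C → 0 ≤ u' u} := by
      have heq : {u' : StrongDual ℝ Bm | ∀ u : Bm, jm u ∈ C → 0 ≤ u' u}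
          = ⋂ u ∈ {v : Bm | jm v ∈ C}, {u' : StrongDual ℝ Bm | 0 ≤ u' u} := by
        ext u'; simp [Set.mem_iInter]
      rw [heq]
      refine isClosed_biInter fun u _ => ?_
      exact isClosed_le continuous_const (ContinuousLinearMap.apply ℝ ℝ u).continuous
    refine closure_minimal ?_ hclosedDm
    rintro _ ⟨f, hf, rfl⟩ u hu
    exact hf (jm u) hu
end

section
/- Separation step: if u' ∈ D_m⁺ does not lie in the closure of ᵗj_m(D⁺) in B_m', then (using reflexivity of B_m) there exists u ∈ B_m with ⟨ᵗj_m l', u⟩ ≥ 0 for all l' ∈ D⁺ and ⟨u', u⟩ < 0; this implies j_m u ∈ C⁺ (when (C⁺)°° = C⁺ via bipolar), contradicting u' ∈ D_m⁺. Hence D_m⁺ ⊆ closure(ᵗj_m D⁺). -/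
open NormedSpace

/-- Bipolar-type lemma: if x is nonnegative against every functional nonnegative on
a closed convex cone C containing 0, then x ∈ C. -/
lemma bipolar_mem_aux {L : Type*} [NormedAddCommGroup L] [NormedSpace ℝ L]
    (C : Set L) (hCclosed : IsClosed C) (hCconvex : Convex ℝ C) (hC0 : (0 : L) ∈ C)
    (hCcone : ∀ c : ℝ, 0 ≤ c → ∀ x ∈ C, c • x ∈ C)
    (x : L) (hx : ∀ l' : StrongDual ℝ L, (∀ y ∈ C, 0 ≤ l' y) → 0 ≤ l' x) : x ∈ C := by
  by_contra hxC
  obtain ⟨f, s, hfx, hfC⟩ := geometric_hahn_banach_point_closed hCconvex hCclosed hxC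
  have hs0 : s < 0 := by simpa using hfC 0 hC0
  have hfpos : ∀ y ∈ C, 0 ≤ f y := by
    intro y hy
    by_contra hneg
    push_neg at hneg
    have ht : (0 : ℝ) ≤ (s - 1) / f y := by
      rw [div_nonneg_iff]; right; constructor <;> linarith
    have := hfC _ (hCcone _ ht y hy)
    rw [map_smul] at this
    have : s < (s - 1) / f y * f y := this
    rw [div_mul_cancel₀ _ (ne_of_lt hneg)] at this
    linarith
  have := hx f hfpos
  linarith
/-- Separation step: if u' ∈ D_m⁺ does not lie in the closure of
ᵗj_m(D⁺) in B_m', then (using reflexivity of B_m) there exists u ∈ B_m with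
⟨ᵗj_m l', u⟩ ≥ 0 for all l' ∈ D⁺ and ⟨u', u⟩ < 0. Hence
D_m⁺ ⊆ closure(ᵗj_m D⁺). -/
theorem separation_step_dual_cone
    {L Bm : Type*}
    [NormedAddCommGroup L] [NormedSpace ℝ L] [CompleteSpace L]
    [NormedAddCommGroup Bm] [NormedSpace ℝ Bm] [CompleteSpace Bm]
    (hLrefl : Function.Surjective (inclusionInDoubleDual ℝ L))
    (hBmrefl : Function.Surjective (inclusionInDoubleDual ℝ Bm))
    (jm : Bm →L[ℝ] L) (hjminj : Function.Injective jm)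
    (hjmdense : DenseRange jm)
    (C : Set L)
    (hCclosed : IsClosed C) (hCconvex : Convex ℝ C) (hC0 : (0 : L) ∈ C)
    (hCcone : ∀ c : ℝ, 0 ≤ c → ∀ x ∈ C, c • x ∈ C)
    (hdense : C ⊆ closure (jm '' {v : Bm | jm v ∈ C})) :
    (∀ u' ∈ {u' : StrongDual ℝ Bm | ∀ u : Bm, jm u ∈ C → 0 ≤ u' u},
      u' ∉ closure ((fun l' : StrongDual ℝ L => l'.comp jm) ''
          {l' : StrongDual ℝ L | ∀ x ∈ C, 0 ≤ l' x}) →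
      ∃ u : Bm, (∀ l' ∈ {l' : StrongDual ℝ L | ∀ x ∈ C, 0 ≤ l' x},
          0 ≤ (l'.comp jm) u) ∧ u' u < 0) ∧
    {u' : StrongDual ℝ Bm | ∀ u : Bm, jm u ∈ C → 0 ≤ u' u} ⊆
      closure ((fun l' : StrongDual ℝ L => l'.comp jm) ''
        {l' : StrongDual ℝ L | ∀ x ∈ C, 0 ≤ l' x}) := by
  set Dp : Set (StrongDual ℝ L) := {l' : StrongDual ℝ L | ∀ x ∈ C, 0 ≤ l' x} with hDp
  set T : StrongDual ℝ L → StrongDual ℝ Bm := fun l' => l'.comp jm with hT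
  set S : Set (StrongDual ℝ Bm) := closure (T '' Dp) with hS
  -- Dp is a convex cone containing 0
  have hDpconv : Convex ℝ Dp := by
    intro a ha b hb s t hs ht hst
    intro x hx
    simp only [ContinuousLinearMap.add_apply, ContinuousLinearMap.coe_smul',
      Pi.add_apply, Pi.smul_apply, smul_eq_mul]
    have := ha x hx; have := hb x hx
    positivity
  have hTDconv : Convex ℝ (T '' Dp) := by
    have hlin : IsLinearMap ℝ T := by
      constructor
      · intro a b; ext u; simp [hT]
      · intro c a; ext u; simp [hT]
    exact hDpconv.is_linear_image hlin
  have hSconv : Convex ℝ S := hTDconv.closure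
  have h0S : (0 : StrongDual ℝ Bm) ∈ S := by
    apply subset_closure
    exact ⟨0, fun x _ => le_refl 0, by ext u; simp [hT]⟩
  -- S is closed under nonneg scalar multiplication
  have hScone : ∀ c : ℝ, 0 ≤ c → ∀ a ∈ S, c • a ∈ S := by
    intro c hc a ha
    have hcont : Continuous (fun b : StrongDual ℝ Bm => c • b) := continuous_const_smul c
    have : c • a ∈ closure ((fun b : StrongDual ℝ Bm => c • b) '' (T '' Dp)) :=
      map_mem_closure hcont ha (fun b hb => Set.mem_image_of_mem _ hb)
    refine closure_mono ?_ this
    rintro _ ⟨b, ⟨l', hl', rfl⟩, rfl⟩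
    refine ⟨c • l', ?_, ?_⟩
    · intro x hx
      simp only [ContinuousLinearMap.coe_smul', Pi.smul_apply, smul_eq_mul]
      exact mul_nonneg hc (hl' x hx)
    · ext u; simp [hT]
  -- Main separation claim
  have main : ∀ u' ∈ {u' : StrongDual ℝ Bm | ∀ u : Bm, jm u ∈ C → 0 ≤ u' u},
      u' ∉ S →
      ∃ u : Bm, (∀ l' ∈ Dp, 0 ≤ (l'.comp jm) u) ∧ u' u < 0 := by
    intro u' _ hu'S
    obtain ⟨F, s, hFS, hFu'⟩ := geometric_hahn_banach_closed_point hSconv isClosed_closure hu'S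
    have hs0 : 0 < s := by simpa using hFS 0 h0S
    have hFnonpos : ∀ a ∈ S, F a ≤ 0 := by
      intro a ha
      by_contra hpos
      push_neg at hpos
      have ht : (0 : ℝ) ≤ (s + 1) / F a := by positivity
      have := hFS _ (hScone _ ht a ha)
      rw [map_smul] at this
      have : (s + 1) / F a * F a < s := this
      rw [div_mul_cancel₀ _ (ne_of_gt hpos)] at this
      linarith
    obtain ⟨u₀, hu₀⟩ := hBmrefl F
    refine ⟨-u₀, ?_, ?_⟩
    · intro l' hl'
      have hmem : T l' ∈ S := subset_closure (Set.mem_image_of_mem _ hl')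
      have := hFnonpos _ hmem
      have heval : F (T l') = (T l') u₀ := by rw [← hu₀]; rfl
      have : (l'.comp jm) u₀ ≤ 0 := by rw [← heval]; exact this
      simpa using neg_nonneg.mpr this
    · have heval : F u' = u' u₀ := by rw [← hu₀]; rfl
      have : s < u' u₀ := heval ▸ hFu'
      have : 0 < u' u₀ := lt_trans hs0 this
      simpa using neg_neg_iff_pos.mpr this
  refine ⟨main, ?_⟩
  intro u' hu'
  by_contra hu'S
  obtain ⟨u, hpos, hneg⟩ := main u' hu' hu'S
  have hmem : jm u ∈ C := by
    apply bipolar_mem_aux C hCclosed hCconvex hC0 hCcone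
    intro l' hl'
    exact hpos l' hl'
  exact absurd (hu' u hmem) (not_le.mpr hneg)
end

section
/- For all u ∈ C₁⁺ and v' ∈ ᵗj₀(D⁺), one has ⟨ω̄ v', u⟩₁ = sup{⟨v', v⟩₀ : v ∈ C₀⁺, u − j v ∈ C₁⁺}, assuming there exists a sequence (v_p) in C₀⁺ with u − j v_p ∈ C₁⁺ for all p and ‖j₀ v_p − j₁ u‖_L → 0. -/
open NormedSpace

/-- For all u ∈ C₁⁺ and v' = ᵗj₀ l' with l' ∈ D⁺, one has
⟨ω̄ v', u⟩₁ = sup{⟨v', v⟩₀ : v ∈ C₀⁺, u − j v ∈ C₁⁺}, assuming there exists a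
sequence (v_p) in C₀⁺ with u − j v_p ∈ C₁⁺ for all p and
‖j₀ v_p − j₁ u‖_L → 0. -/
theorem omega_pairing_eq_sup
    {L B0 B1 : Type*}
    [NormedAddCommGroup L] [NormedSpace ℝ L] [CompleteSpace L]
    [NormedAddCommGroup B0] [NormedSpace ℝ B0] [CompleteSpace B0]
    [NormedAddCommGroup B1] [NormedSpace ℝ B1] [CompleteSpace B1]
    (j0 : B0 →L[ℝ] L) (j1 : B1 →L[ℝ] L) (j : B0 →L[ℝ] B1)
    (hj0dense : DenseRange j0) (hj1dense : DenseRange j1)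
    (hcomp : ∀ v : B0, j0 v = j1 (j v))
    (C : Set L)
    (hCclosed : IsClosed C) (hCconvex : Convex ℝ C) (hC0 : (0 : L) ∈ C)
    (hCcone : ∀ c : ℝ, 0 ≤ c → ∀ x ∈ C, c • x ∈ C)
    (ω : StrongDual ℝ B0 → StrongDual ℝ B1)
    (hω : ∀ m' : StrongDual ℝ L, ω (m'.comp j0) = m'.comp j1)
    (u : B1) (hu : j1 u ∈ C)
    (l' : StrongDual ℝ L) (hl' : ∀ x ∈ C, 0 ≤ l' x)
    (v' : StrongDual ℝ B0) (hv' : v' = l'.comp j0)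
    (vseq : ℕ → B0)
    (hvseq0 : ∀ p : ℕ, j0 (vseq p) ∈ C)
    (hvseq1 : ∀ p : ℕ, j1 (u - j (vseq p)) ∈ C)
    (hvseqlim : Filter.Tendsto (fun p => j0 (vseq p)) Filter.atTop
      (nhds (j1 u))) :
    ω v' u = sSup {r : ℝ | ∃ v : B0, j0 v ∈ C ∧ j1 (u - j v) ∈ C ∧ r = v' v} := by
  subst hv'
  rw [hω l']
  have hub : ∀ r ∈ {r : ℝ | ∃ v : B0, j0 v ∈ C ∧ j1 (u - j v) ∈ C ∧ r = (l'.comp j0) v},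
      r ≤ l' (j1 u) := by
    rintro r ⟨v, hv0, hv1, rfl⟩
    have h1 : 0 ≤ l' (j1 (u - j v)) := hl' _ hv1
    have h2 : (l'.comp j0) v = l' (j1 u) - l' (j1 (u - j v)) := by
      simp [ContinuousLinearMap.comp_apply, hcomp v, map_sub]
    linarith
  have hmem : ∀ p, (l'.comp j0) (vseq p) ∈
      {r : ℝ | ∃ v : B0, j0 v ∈ C ∧ j1 (u - j v) ∈ C ∧ r = (l'.comp j0) v} :=
    fun p => ⟨vseq p, hvseq0 p, hvseq1 p, rfl⟩
  have hlim : Filter.Tendsto (fun p => l' (j0 (vseq p))) Filter.atTop (nhds (l' (j1 u))) :=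
    (l'.continuous.tendsto _).comp hvseqlim
  apply le_antisymm
  · refine le_of_tendsto hlim (Filter.Eventually.of_forall fun p => ?_)
    exact le_csSup ⟨l' (j1 u), fun r hr => hub r hr⟩ (hmem p)
  · exact csSup_le ⟨_, hmem 0⟩ hub
end

section
/- Relative Green's formula: for every u ∈ B_{G,E} and every y ∈ B₁, ⟨G u, y⟩₁ = ⟨ω̄_E ρ G u, y⟩₁ + ⟨γ_{G,E} u, γ₀ y⟩_{T',T}, where γ_{G,E} is the restriction of γ_G to B_{G,E} ⊆ B_G. -/
open NormedSpace

/-- Relative Green's formula: for every u ∈ B_{G,E} and every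
y ∈ B₁, ⟨G u, y⟩₁ = ⟨ω̄_E ρ G u, y⟩₁ + ⟨γ_{G,E} u, γ₀ y⟩_{T',T}, where
B_{G,E} = {u ∈ B₁ : ρ G u ∈ ᵗl₀(E')} ⊆ B_G, ω̄_E is the restriction of ω̄,
and γ_{G,E} is the restriction of γ_G to B_{G,E}. -/
theorem relative_green_formula
    {L B0 B1 T E : Type*}
    [NormedAddCommGroup L] [NormedSpace ℝ L] [CompleteSpace L]
    [NormedAddCommGroup B0] [NormedSpace ℝ B0] [CompleteSpace B0]
    [NormedAddCommGroup B1] [NormedSpace ℝ B1] [CompleteSpace B1]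
    [NormedAddCommGroup T] [NormedSpace ℝ T] [CompleteSpace T]
    [NormedAddCommGroup E] [NormedSpace ℝ E] [CompleteSpace E]
    (j0 : B0 →L[ℝ] L) (j1 : B1 →L[ℝ] L) (j : B0 →L[ℝ] B1) (γ0 : B1 →L[ℝ] T)
    (hcomp : ∀ v : B0, j0 v = j1 (j v))
    (hrangeker : Set.range (fun t' : StrongDual ℝ T => t'.comp γ0) =
      {b' : StrongDual ℝ B1 | b'.comp j = 0})
    (htγ0inj : Function.Injective (fun t' : StrongDual ℝ T => t'.comp γ0))
    (k : L →L[ℝ] E) (hkinj : Function.Injective k) (hkdense : DenseRange k)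
    (l0 : B0 →L[ℝ] E) (hl0 : ∀ v : B0, l0 v = k (j0 v))
    (l1 : B1 →L[ℝ] E) (hl1 : ∀ w : B1, l1 w = k (j1 w))
    (ω : StrongDual ℝ B0 → StrongDual ℝ B1)
    (hω : ∀ m' : StrongDual ℝ L, ω (m'.comp j0) = m'.comp j1)
    (ωE : StrongDual ℝ B0 → StrongDual ℝ B1)
    (hωE : ∀ e' : StrongDual ℝ E, ωE (e'.comp l0) = e'.comp l1)
    (G : B1 → StrongDual ℝ B1) (hG : Continuous G)
    (γG : B1 → StrongDual ℝ T)
    (hγG : ∀ u ∈ {u : B1 | ∃ m' : StrongDual ℝ L, (G u).comp j = m'.comp j0},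
      (γG u).comp γ0 = G u - ω ((G u).comp j)) :
    ∀ u ∈ {u : B1 | ∃ e' : StrongDual ℝ E, (G u).comp j = e'.comp l0},
      ∀ y : B1, G u y = ωE ((G u).comp j) y + γG u (γ0 y) := by
  rintro u ⟨e', he'⟩ y
  have hm : (G u).comp j = (e'.comp k).comp j0 := by
    rw [he']
    ext v
    simp [hl0 v]
  have hmem : u ∈ {u : B1 | ∃ m' : StrongDual ℝ L, (G u).comp j = m'.comp j0} :=
    ⟨e'.comp k, hm⟩
  have hγ := hγG u hmem
  have h0 : (e'.comp k).comp j0 = e'.comp l0 := by ext v; simp [hl0 v]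
  have h1 : (e'.comp k).comp j1 = e'.comp l1 := by ext w; simp [hl1 w]
  have hωeq : ω ((G u).comp j) = ωE ((G u).comp j) := by
    rw [hm, hω, h0, hωE, h1]
  have := congrArg (fun f : StrongDual ℝ B1 => f y) hγ
  simp only [ContinuousLinearMap.comp_apply, ContinuousLinearMap.sub_apply] at this
  rw [hωeq] at this
  linarith
end
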